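/- For a group G, the following are equivalent: (1) every function f : G → ℝ that is macro-uniform with respect to the finitary ballean of G (i.e., for every finite F ⊆ G, sup_{x ∈ G} diam f({x} ∪ Fx) < ∞) is bounded; (2) G is Bergman, i.e., G cannot be written as the union of a strictly increasing sequence (X_n)_{n∈ℕ} of subsets such that X_n = X_n⁻¹ and X_n·X_n ⊆ X_{n+1} for all n. -/

import Mathlib

open Pointwise

/-- The ball `E_F[x] = {x} ∪ Fx` of the finitary ballean of a group. -/
def grpBall {G : Type*} [Group G] (F : Set G) (x : G) : Set G :=
  insert x ((fun g => g * x) '' F)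

/-- The finitary ballean of a group `G` is mu-bounded (every macro-uniform
`f : G → ℝ` is bounded) iff `G` is a Bergman group (it is not the union of a
strictly increasing chain `(X n)` with `Xₙ⁻¹ = Xₙ` and `Xₙ·Xₙ ⊆ Xₙ₊₁`). -/
theorem finitary_muBounded_iff_bergman (G : Type*) [Group G] :
    (∀ f : G → ℝ,
      (∀ F : Set G, F.Finite → ∃ C : ℝ, ∀ x : G,
        ∀ a ∈ grpBall F x, ∀ b ∈ grpBall F x, |f a - f b| ≤ C) →
      ∃ C : ℝ, ∀ x : G, |f x| ≤ C) ↔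
    ¬∃ Xs : ℕ → Set G,
      (∀ n : ℕ, Xs n ⊂ Xs (n + 1)) ∧
      (∀ n : ℕ, (Xs n)⁻¹ = Xs n) ∧
      (∀ n : ℕ, Xs n * Xs n ⊆ Xs (n + 1)) ∧
      (⋃ n : ℕ, Xs n) = Set.univ := by
  constructor
  · -- mu-bounded → Bergman
    rintro hmu ⟨Xs, hstrict, hsymm, hprod, huniv⟩
    classical
    have hmono : Monotone Xs := monotone_nat_of_le_succ fun n => (hstrict n).1
    have hex : ∀ x : G, ∃ n, x ∈ Xs n := fun x =>
      Set.mem_iUnion.mp (huniv ▸ Set.mem_univ x)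
    set f : G → ℝ := fun x => (Nat.find (hex x) : ℝ) with hfdef
    have hfx : ∀ x, x ∈ Xs (Nat.find (hex x)) := fun x => Nat.find_spec (hex x)
    have hle : ∀ x n, x ∈ Xs n → Nat.find (hex x) ≤ n := fun x n h => Nat.find_le h
    -- f is macro-uniform
    have hMU : ∀ F : Set G, F.Finite → ∃ C : ℝ, ∀ x : G,
        ∀ a ∈ grpBall F x, ∀ b ∈ grpBall F x, |f a - f b| ≤ C := by
      intro F hF
      have hFN : ∃ N, F ⊆ Xs N := by
        refine Set.Finite.induction_on (motive := fun s _ => ∃ N, s ⊆ Xs N) F hF ⟨0, by simp⟩ ?_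
        rintro a s ha hs ⟨N, hN⟩
        obtain ⟨M, hM⟩ := hex a
        exact ⟨max N M, Set.insert_subset (hmono (le_max_right _ _) hM)
          (hN.trans (hmono (le_max_left _ _)))⟩
      obtain ⟨N, hN⟩ := hFN
      have key : ∀ x : G, ∀ a ∈ grpBall F x, |f a - f x| ≤ (N : ℝ) + 1 := by
        intro x a ha
        rcases ha with rfl | ⟨g, hg, rfl⟩
        · simp [hfdef]; positivity
        · have hgN : g ∈ Xs N := hN hg
          set m := Nat.find (hex x) with hm
          set k := Nat.find (hex (g * x)) with hk
          -- upper bound: k ≤ m + N + 1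
          have h1 : g * x ∈ Xs (max N m + 1) :=
            hprod _ (Set.mul_mem_mul (hmono (le_max_left _ _) hgN)
              (hmono (le_max_right _ _) (hfx x)))
          have hk1 : k ≤ max N m + 1 := hle _ _ h1
          -- lower bound: m ≤ k + N + 1
          have hginv : g⁻¹ ∈ Xs N := by
            rw [← hsymm N]; exact Set.inv_mem_inv.mpr hgN
          have h2 : g⁻¹ * (g * x) ∈ Xs (max N k + 1) :=
            hprod _ (Set.mul_mem_mul (hmono (le_max_left _ _) hginv)
              (hmono (le_max_right _ _) (hfx (g * x))))
          have h2' : x ∈ Xs (max N k + 1) := by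
            rwa [inv_mul_cancel_left] at h2
          have hm1 : m ≤ max N k + 1 := hle _ _ h2'
          have hk2 : (k : ℝ) ≤ (m : ℝ) + ((N : ℝ) + 1) := by
            have : k ≤ m + (N + 1) := hk1.trans (by omega)
            exact_mod_cast this
          have hm2 : (m : ℝ) ≤ (k : ℝ) + ((N : ℝ) + 1) := by
            have : m ≤ k + (N + 1) := hm1.trans (by omega)
            exact_mod_cast this
          rw [abs_sub_le_iff]
          constructor <;> simp only [hfdef] <;> linarith
      refine ⟨2 * ((N : ℝ) + 1), fun x a ha b hb => ?_⟩
      calc |f a - f b| ≤ |f a - f x| + |f x - f b| := abs_sub_le _ _ _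
        _ ≤ ((N : ℝ) + 1) + ((N : ℝ) + 1) := by
            have := key x a ha
            have h2 := key x b hb
            rw [abs_sub_comm] at h2
            linarith
        _ = 2 * ((N : ℝ) + 1) := by ring
    obtain ⟨C, hC⟩ := hmu f hMU
    obtain ⟨n, hn⟩ := exists_nat_gt C
    obtain ⟨x, hx1, hx2⟩ := Set.not_subset.mp
      (fun h => (hstrict n).2 h)
    have hfind : n < Nat.find (hex x) := by
      by_contra h
      push_neg at h
      exact hx2 (hmono h (hfx x))
    have : (n : ℝ) < f x := by
      simp only [hfdef]
      exact_mod_cast hfind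
    have := hC x
    have : f x ≤ |f x| := le_abs_self _
    linarith [hC x, le_abs_self (f x)]
  · -- Bergman → mu-bounded
    intro hB f hf
    by_contra hb
    push_neg at hb
    exfalso
    apply hB
    -- for each g, a uniform constant
    have hCg : ∀ g : G, ∃ C : ℝ, 0 ≤ C ∧ ∀ y : G, |f (g * y) - f y| ≤ C := by
      intro g
      obtain ⟨C, hC⟩ := hf {g} (Set.finite_singleton g)
      have h1 : (1 : G) ∈ grpBall {g} 1 := Set.mem_insert _ _
      refine ⟨C, by simpa using hC 1 1 h1 1 h1, fun y => ?_⟩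
      have hgy : g * y ∈ grpBall {g} y :=
        Set.mem_insert_of_mem _ ⟨g, rfl, rfl⟩
      exact hC y _ hgy y (Set.mem_insert _ _)
    classical
    let Cg : G → ℝ := fun g => (hCg g).choose
    have hCg0 : ∀ g, 0 ≤ Cg g := fun g => (hCg g).choose_spec.1
    have hCgs : ∀ g y, |f (g * y) - f y| ≤ Cg g := fun g y => (hCg g).choose_spec.2 y
    -- witness of unboundedness
    let w : ℝ → G := fun t => (hb (t + |f 1|)).choose
    have hw : ∀ t : ℝ, t + |f 1| < |f (w t)| := fun t => (hb (t + |f 1|)).choose_spec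
    -- the scale sequence
    let st : ℝ → ℝ := fun t => max (2 * t) (Cg (w t))
    let a : ℕ → ℝ := fun n => st^[n] 1
    have ha0 : a 0 = 1 := rfl
    have hasucc : ∀ n, a (n + 1) = st (a n) := fun n =>
      Function.iterate_succ_apply' st n 1
    have ha1 : ∀ n, 1 ≤ a n := by
      intro n
      induction n with
      | zero => simp [ha0]
      | succ n ih =>
        rw [hasucc]
        have : a n ≤ 2 * a n := by linarith
        exact le_trans (ih.trans this) (le_max_left _ _)
    have haMono : ∀ n, a n ≤ a (n + 1) := by
      intro n
      rw [hasucc]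
      have h1 := ha1 n
      have : a n ≤ 2 * a n := by linarith
      exact this.trans (le_max_left _ _)
    have hadouble : ∀ n, 2 * a n ≤ a (n + 1) := by
      intro n; rw [hasucc]; exact le_max_left _ _
    have hapow : ∀ n, (2 : ℝ) ^ n ≤ a n := by
      intro n
      induction n with
      | zero => simp [ha0]
      | succ n ih =>
        calc (2 : ℝ) ^ (n + 1) = 2 * 2 ^ n := by ring
          _ ≤ 2 * a n := by linarith
          _ ≤ a (n + 1) := hadouble n
    -- the chain
    set X : ℕ → Set G := fun n => {x : G | ∀ y : G, |f (x * y) - f y| ≤ a n} with hX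
    have hXmono : ∀ n, X n ⊆ X (n + 1) := by
      intro n x hx y
      exact (hx y).trans (haMono n)
    refine ⟨X, fun n => ?_, fun n => ?_, fun n => ?_, ?_⟩
    · -- strict
      refine ⟨hXmono n, fun hsub => ?_⟩
      have hwin : w (a n) ∈ X (n + 1) := by
        intro y
        refine (hCgs (w (a n)) y).trans ?_
        rw [hasucc]
        exact le_max_right _ _
      have hwout : w (a n) ∉ X n := by
        intro h
        have := h 1
        rw [mul_one] at this
        have h2 := hw (a n)
        have h3 : |f (w (a n))| - |f 1| ≤ |f (w (a n)) - f 1| := abs_sub_abs_le_abs_sub _ _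
        linarith
      exact hwout (hsub hwin)
    · -- symmetric
      have key : ∀ x : G, x ∈ X n → x⁻¹ ∈ X n := by
        intro x hx y
        have := hx (x⁻¹ * y)
        rw [mul_inv_cancel_left] at this
        rw [abs_sub_comm]
        exact this
      ext x
      simp only [Set.mem_inv]
      constructor
      · intro h
        have := key x⁻¹ h
        rwa [inv_inv] at this
      · exact key x
    · -- product
      rintro z hz
      rw [Set.mem_mul] at hz
      obtain ⟨x, hx, u, hu, rfl⟩ := hz
      intro y
      calc |f (x * u * y) - f y|
          ≤ |f (x * (u * y)) - f (u * y)| + |f (u * y) - f y| := by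
            rw [mul_assoc]; exact abs_sub_le _ _ _
        _ ≤ a n + a n := add_le_add (hx (u * y)) (hu y)
        _ ≤ a (n + 1) := by linarith [hadouble n]
    · -- union
      ext x
      simp only [Set.mem_iUnion, Set.mem_univ, iff_true]
      obtain ⟨n, hn⟩ := pow_unbounded_of_one_lt (Cg x) (by norm_num : (1 : ℝ) < 2)
      refine ⟨n, fun y => ?_⟩
      exact (hCgs x y).trans (hn.le.trans (hapow n))
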